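/- arXiv:2212.11708 — 2 statements merged into one kernel-verified Lean document; each statement's English description precedes it below -/
import Mathlib

section
/- Let H be a positive semidefinite (possibly unbounded) Hamiltonian on a Hilbert space with discrete spectrum, ρ a density operator, and ε ≥ 0. Fix an energy threshold ē ≥ 0 and let P_ē be the spectral projection of H onto the eigenspaces with eigenvalue at most ē. Then every density operator σ with (1/2)‖σ − ρ‖₁ ≤ ε satisfies tr(σH) ≥ tr(P_ē H P_ē ρ) − 2ε·ē. -/
/- STATEMENT 2 (Corollary 1): For a grounded discrete Hamiltonian
H = diag(e₀ ≤ e₁ ≤ ⋯) with eᵢ ≥ 0, a density operator ρ, ε ≥ 0 and an energy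
threshold ē ≥ 0 with spectral projection P_ē onto eigenvalues ≤ ē, every density
operator σ with (1/2)‖σ-ρ‖₁ ≤ ε satisfies tr(σH) ≥ tr(P_ē H P_ē ρ) - 2ε·ē.
(We formalize the Hamiltonian in its eigenbasis as a diagonal matrix.) -/

open Matrix
open scoped ComplexOrder
noncomputable section

def traceNorm {d : ℕ} (A : Matrix (Fin d) (Fin d) ℂ) : ℝ :=
  (((Matrix.posSemidef_conjTranspose_mul_self A).1.eigenvectorUnitary.1 *
    diagonal ((fun x : ℝ => (x : ℂ)) ∘ (√·) ∘ (Matrix.posSemidef_conjTranspose_mul_self A).1.eigenvalues) *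
    (star (Matrix.posSemidef_conjTranspose_mul_self A).1.eigenvectorUnitary :
      Matrix (Fin d) (Fin d) ℂ)).trace).re

def IsDensity {d : ℕ} (ρ : Matrix (Fin d) (Fin d) ℂ) : Prop := ρ.PosSemidef ∧ ρ.trace = 1

lemma sqrt_herm {d : ℕ} {A : Matrix (Fin d) (Fin d) ℂ} (hA : A.IsHermitian) :
    (Matrix.posSemidef_conjTranspose_mul_self A).1.eigenvectorUnitary.1 *
      diagonal ((fun x : ℝ => (x : ℂ)) ∘ (√·) ∘ (Matrix.posSemidef_conjTranspose_mul_self A).1.eigenvalues) *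
      (star (Matrix.posSemidef_conjTranspose_mul_self A).1.eigenvectorUnitary :
        Matrix (Fin d) (Fin d) ℂ) =
      (hA.eigenvectorUnitary : Matrix (Fin d) (Fin d) ℂ) *
        Matrix.diagonal (fun k => ((|hA.eigenvalues k| : ℝ) : ℂ)) *
        (star (hA.eigenvectorUnitary : Matrix (Fin d) (Fin d) ℂ)) := by
  have h1 : cfc Real.sqrt (Aᴴ * A) =
      (Matrix.posSemidef_conjTranspose_mul_self A).1.eigenvectorUnitary.1 *
      diagonal ((fun x : ℝ => (x : ℂ)) ∘ (√·) ∘ (Matrix.posSemidef_conjTranspose_mul_self A).1.eigenvalues) *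
      (star (Matrix.posSemidef_conjTranspose_mul_self A).1.eigenvectorUnitary :
        Matrix (Fin d) (Fin d) ℂ) :=
    (Matrix.posSemidef_conjTranspose_mul_self A).1.cfc_eq Real.sqrt
  have h2 : cfc (fun x : ℝ => |x|) A = (hA.eigenvectorUnitary : Matrix (Fin d) (Fin d) ℂ) *
        Matrix.diagonal (fun k => ((|hA.eigenvalues k| : ℝ) : ℂ)) *
        (star (hA.eigenvectorUnitary : Matrix (Fin d) (Fin d) ℂ)) :=
    hA.cfc_eq (fun x => |x|)
  have hsa : IsSelfAdjoint A := hA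
  rw [← h1, ← h2, hA.eq, ← sq, ← cfc_comp_pow Real.sqrt 2 A (by fun_prop) hsa]
  congr 1
  funext x
  exact Real.sqrt_sq_eq_abs x

theorem truncated_energy_lower_bound {d : ℕ}
    (e : Fin d → ℝ) (he : ∀ i, 0 ≤ e i) (hmono : Monotone e)
    (ρ σ : Matrix (Fin d) (Fin d) ℂ) (hρ : IsDensity ρ) (hσ : IsDensity σ)
    (ε : ℝ) (hε : 0 ≤ ε) (ebar : ℝ) (hebar : 0 ≤ ebar)
    -- the Hamiltonian H = ∑ₙ eₙ |eₙ⟩⟨eₙ| in its eigenbasis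
    (H : Matrix (Fin d) (Fin d) ℂ) (hH : H = Matrix.diagonal (fun i => (e i : ℂ)))
    -- the spectral projection P_ē onto eigenspaces with energy ≤ ē
    (P : Matrix (Fin d) (Fin d) ℂ)
    (hP : P = Matrix.diagonal (fun i => if e i ≤ ebar then (1 : ℂ) else 0))
    (hclose : (1 / 2) * traceNorm (σ - ρ) ≤ ε) :
    ((σ * H).trace).re ≥ ((P * H * P * ρ).trace).re - 2 * ε * ebar := by
  set A : Matrix (Fin d) (Fin d) ℂ := σ - ρ with hAdef
  have hA : A.IsHermitian := hσ.1.1.sub hρ.1.1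
  set U : Matrix (Fin d) (Fin d) ℂ := (hA.eigenvectorUnitary : Matrix (Fin d) (Fin d) ℂ)
  set μ : Fin d → ℝ := hA.eigenvalues with hμ
  have hU1 : star U * U = 1 := Matrix.mem_unitaryGroup_iff'.mp hA.eigenvectorUnitary.2
  have hcol : ∀ k, ∑ i, Complex.normSq (U i k) = 1 := by
    intro k
    have := congrFun (congrFun hU1 k) k
    simp only [Matrix.mul_apply, Matrix.one_apply_eq, Matrix.star_apply] at this
    have hre := congrArg Complex.re this
    rw [Complex.re_sum] at hre
    simpa [Complex.mul_re, Complex.normSq_apply] using hre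
  -- diagonal entries of U * diagonal f * Uᴴ
  have hUDU : ∀ (f : Fin d → ℝ) (i : Fin d),
      (U * Matrix.diagonal (fun k => ((f k : ℝ) : ℂ)) * star U) i i
        = ∑ k, (f k : ℂ) * (Complex.normSq (U i k) : ℂ) := by
    intro f i
    rw [Matrix.mul_apply]
    apply Finset.sum_congr rfl
    intro k _
    rw [Matrix.mul_diagonal, Matrix.star_apply, mul_right_comm]
    rw [show star (U i k) = starRingEnd ℂ (U i k) from rfl, Complex.mul_conj]
    ring
  -- trace norm equals sum of absolute values of eigenvalues
  have htn : traceNorm A = ∑ k, |μ k| := by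
    rw [traceNorm, sqrt_herm hA, Matrix.trace_mul_comm, ← mul_assoc, hU1, one_mul,
      Matrix.trace_diagonal, Complex.re_sum]
    simp [hμ]
  -- diagonal entries of A
  have hdiag_re : ∀ i, (A i i).re = ∑ k, μ k * Complex.normSq (U i k) := by
    intro i
    conv_lhs => rw [hA.spectral_theorem, Unitary.conjStarAlgAut_apply]
    rw [show Matrix.diagonal (RCLike.ofReal ∘ hA.eigenvalues)
        = Matrix.diagonal (fun k => ((μ k : ℝ) : ℂ)) from rfl]
    rw [hUDU μ i, Complex.re_sum]
    apply Finset.sum_congr rfl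
    intro k _
    rw [← Complex.ofReal_mul]
    simp
  -- bound on sum of |diagonal entries|
  have hdiagbound : ∑ i, |(A i i).re| ≤ traceNorm A := by
    rw [htn]
    calc ∑ i, |(A i i).re| ≤ ∑ i, ∑ k, |μ k| * Complex.normSq (U i k) := by
          apply Finset.sum_le_sum
          intro i _
          rw [hdiag_re i]
          refine (Finset.abs_sum_le_sum_abs _ _).trans ?_
          apply Finset.sum_le_sum
          intro k _
          rw [abs_mul, abs_of_nonneg (Complex.normSq_nonneg _)]
      _ = ∑ k, |μ k| * ∑ i, Complex.normSq (U i k) := by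
          rw [Finset.sum_comm]; simp [Finset.mul_sum]
      _ = ∑ k, |μ k| := by simp [hcol]
  have hTN : traceNorm A ≤ 2 * ε := by linarith
  -- diagonal entries of density matrices are real and nonneg
  have hdens : ∀ (τ : Matrix (Fin d) (Fin d) ℂ), τ.PosSemidef → ∀ i, 0 ≤ (τ i i).re := by
    intro τ hτ i
    have h := hτ.diag_nonneg (i := i)
    rw [Complex.le_def] at h
    simpa using h.1
  -- compute the two traces
  set c : Fin d → ℝ := fun i => if e i ≤ ebar then e i else 0 with hc
  have hLHS : ((σ * H).trace).re = ∑ i, e i * (σ i i).re := by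
    subst hH
    simp only [Matrix.trace, Matrix.diag, Matrix.mul_diagonal]
    rw [Complex.re_sum]
    apply Finset.sum_congr rfl
    intro i _
    simp [Complex.mul_re, mul_comm]
  have hRHS : ((P * H * P * ρ).trace).re = ∑ i, c i * (ρ i i).re := by
    subst hH hP
    rw [Matrix.diagonal_mul_diagonal, Matrix.diagonal_mul_diagonal]
    simp only [Matrix.trace, Matrix.diag, Matrix.diagonal_mul]
    rw [Complex.re_sum]
    apply Finset.sum_congr rfl
    intro i _
    by_cases h : e i ≤ ebar <;> simp [hc, h, Complex.mul_re]
  rw [hLHS, hRHS]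
  have hc_nonneg : ∀ i, 0 ≤ c i := fun i => by by_cases h : e i ≤ ebar <;> simp [hc, h, he i]
  have hc_le : ∀ i, c i ≤ ebar := fun i => by by_cases h : e i ≤ ebar <;> simp [hc, h, hebar]
  have hc_le_e : ∀ i, c i ≤ e i := fun i => by by_cases h : e i ≤ ebar <;> simp [hc, h, he i]
  have step1 : ∑ i, c i * (σ i i).re ≤ ∑ i, e i * (σ i i).re := by
    apply Finset.sum_le_sum
    intro i _
    exact mul_le_mul_of_nonneg_right (hc_le_e i) (hdens σ hσ.1 i)
  have hArr : ∀ i, (A i i).re = (σ i i).re - (ρ i i).re := by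
    intro i; simp [hAdef, Matrix.sub_apply]
  have step2 : ∑ i, c i * (ρ i i).re - 2 * ε * ebar ≤ ∑ i, c i * (σ i i).re := by
    have hsplit : ∑ i, c i * (σ i i).re - ∑ i, c i * (ρ i i).re = ∑ i, c i * (A i i).re := by
      rw [← Finset.sum_sub_distrib]
      apply Finset.sum_congr rfl
      intro i _
      rw [hArr i]; ring
    have hbd : -(ebar * (2 * ε)) ≤ ∑ i, c i * (A i i).re := by
      calc -(ebar * (2 * ε)) ≤ -(ebar * traceNorm A) :=
            neg_le_neg (mul_le_mul_of_nonneg_left hTN hebar)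
        _ ≤ -(ebar * ∑ i, |(A i i).re|) :=
            neg_le_neg (mul_le_mul_of_nonneg_left hdiagbound hebar)
        _ = ∑ i, -(ebar * |(A i i).re|) := by rw [Finset.mul_sum, Finset.sum_neg_distrib]
        _ ≤ ∑ i, c i * (A i i).re := by
            apply Finset.sum_le_sum
            intro i _
            have h1 : |c i * (A i i).re| ≤ ebar * |(A i i).re| := by
              rw [abs_mul, abs_of_nonneg (hc_nonneg i)]
              exact mul_le_mul_of_nonneg_right (hc_le i) (abs_nonneg _)
            have h2 := neg_abs_le (c i * (A i i).re)
            linarith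
    linarith
  linarith
end
end

section
/- The weak duality of the minimum-energy SDP: for a Hamiltonian matrix H ≥ 0 on ℂ^d, a density matrix ρ, and ε ≥ 0, if (A, X, Y) is feasible for the primal (A ≥ 0, tr A = 1, (tr X + tr Y)/2 ≤ 2ε, and the block matrix [[X, −(ρ−A)],[−(ρ−A), Y]] ≥ 0) and (y, z, M) is feasible for the dual (z ≥ 0, M†M ≤ I, (z/2)(M+M†) − y·I ≤ H), then tr(AH) ≥ tr(ρ[(z/2)(M+M†) − y·I]) − 2zε. -/
/- STATEMENT 4: Weak duality of the minimum-energy SDP in primal-dual form.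
If (A, X, Y) is primal feasible (A ≥ 0, tr A = 1, (tr X + tr Y)/2 ≤ 2ε, and the
block matrix [[X, -(ρ-A)], [-(ρ-A), Y]] ≥ 0) and (y, z, M) is dual feasible
(z ≥ 0, MᴴM ≤ I, (z/2)(M+Mᴴ) - y·I ≤ H), then
tr(AH) ≥ tr(ρ[(z/2)(M+Mᴴ) - y·I]) - 2zε. -/

open Matrix
open scoped ComplexOrder
noncomputable section

lemma trace_psd_nonneg {n : Type*} [Fintype n] [DecidableEq n] {P : Matrix n n ℂ}
    (hP : P.PosSemidef) : 0 ≤ P.trace := by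
  rw [Matrix.trace]
  apply Finset.sum_nonneg
  intro i _
  have := hP.dotProduct_mulVec_nonneg (Pi.single i 1)
  simpa [Matrix.mulVec_single, Matrix.diag, dotProduct, Pi.single_apply] using this

lemma trace_mul_psd_nonneg {n : Type*} [Fintype n] [DecidableEq n] {P Q : Matrix n n ℂ}
    (hP : P.PosSemidef) (hQ : Q.PosSemidef) : 0 ≤ (P * Q).trace := by
  obtain ⟨B, rfl⟩ : ∃ B : Matrix n n ℂ, Q = Bᴴ * B := by
    open scoped MatrixOrder in
    obtain ⟨X, hX, -, hXQ⟩ :=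
      CFC.exists_sqrt_of_isSelfAdjoint_of_quasispectrumRestricts hQ.isHermitian
        (QuasispectrumRestricts.nnreal_of_nonneg hQ.nonneg)
    exact ⟨X, by rw [← hXQ, ← Matrix.star_eq_conjTranspose, hX.star_eq]⟩
  have h := trace_psd_nonneg (hP.mul_mul_conjTranspose_same B)
  rwa [Matrix.trace_mul_cycle, Matrix.trace_mul_comm] at h


theorem sdp_weak_duality_primal_dual {d : ℕ}
    (H ρ A X Y M : Matrix (Fin d) (Fin d) ℂ) (y z ε : ℝ)
    (hH : H.PosSemidef) (hρ : ρ.PosSemidef) (hρtr : ρ.trace = 1)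
    (hε : 0 ≤ ε)
    -- primal feasibility
    (hA : A.PosSemidef) (hAtr : A.trace = 1)
    (hXY : ((X.trace).re + (Y.trace).re) / 2 ≤ 2 * ε)
    (hblock : (Matrix.fromBlocks X (-(ρ - A)) (-(ρ - A)) Y).PosSemidef)
    -- dual feasibility
    (hz : 0 ≤ z)
    (hM : ((1 : Matrix (Fin d) (Fin d) ℂ) - Mᴴ * M).PosSemidef)
    (hfeas : (H - (((z : ℂ) / 2) • (M + Mᴴ) - (y : ℂ) • 1)).PosSemidef) :
    ((A * H).trace).re ≥
      ((ρ * (((z : ℂ) / 2) • (M + Mᴴ) - (y : ℂ) • 1)).trace).re - 2 * z * ε := by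
  set B : Matrix (Fin d) (Fin d) ℂ := ρ - A with hB
  set G : Matrix (Fin d) (Fin d) ℂ := ((z : ℂ) / 2) • (M + Mᴴ) - (y : ℂ) • 1 with hG
  have hBH : Bᴴ = B := by
    rw [hB, Matrix.conjTranspose_sub, hρ.1, hA.1]
  have hBtr : B.trace = 0 := by
    rw [hB, Matrix.trace_sub, hρtr, hAtr, sub_self]
  set t : ℂ := (B * M).trace with ht
  -- Y is PSD
  have hY : Y.PosSemidef := by
    have h := hblock.mul_mul_conjTranspose_same
      (Matrix.fromCols (0 : Matrix (Fin d) (Fin d) ℂ) 1)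
    rw [Matrix.conjTranspose_fromCols_eq_fromRows_conjTranspose,
        Matrix.fromCols_mul_fromBlocks, Matrix.fromCols_mul_fromRows] at h
    simpa using h
  -- conjugated block matrix
  have hP : (X - M * B - B * Mᴴ + M * Y * Mᴴ).PosSemidef := by
    have h := hblock.mul_mul_conjTranspose_same (Matrix.fromCols 1 M)
    rw [Matrix.conjTranspose_fromCols_eq_fromRows_conjTranspose,
        Matrix.fromCols_mul_fromBlocks, Matrix.fromCols_mul_fromRows] at h
    simpa [Matrix.add_mul, Matrix.neg_mul, Matrix.mul_assoc, sub_eq_add_neg,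
      add_comm, add_left_comm, add_assoc] using h
  -- trace identities
  have hMB : (M * B).trace = t := by rw [ht, Matrix.trace_mul_comm]
  have hBMh : (B * Mᴴ).trace = star t := by
    have : B * Mᴴ = (M * B)ᴴ := by rw [Matrix.conjTranspose_mul, hBH]
    rw [this, Matrix.trace_conjTranspose, hMB]
  have h1 : 0 ≤ (X - M * B - B * Mᴴ + M * Y * Mᴴ).trace := trace_psd_nonneg hP
  have h1' : (X - M * B - B * Mᴴ + M * Y * Mᴴ).trace
      = X.trace - t - star t + (M * Y * Mᴴ).trace := by
    rw [Matrix.trace_add, Matrix.trace_sub, Matrix.trace_sub, hMB, hBMh]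
  rw [h1', Complex.le_def] at h1
  obtain ⟨h1re, -⟩ := h1
  simp only [Complex.add_re, Complex.sub_re, Complex.zero_re, RCLike.star_def,
    Complex.conj_re] at h1re
  -- bound tr(M Y Mᴴ) by tr Y
  have h2 : 0 ≤ (Y * (1 - Mᴴ * M)).trace := trace_mul_psd_nonneg hY hM
  have h2' : (Y * (1 - Mᴴ * M)).trace = Y.trace - (M * Y * Mᴴ).trace := by
    rw [Matrix.mul_sub, Matrix.mul_one, Matrix.trace_sub,
      Matrix.trace_mul_cycle, Matrix.trace_mul_comm, Matrix.mul_assoc]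
  rw [h2', Complex.le_def] at h2
  obtain ⟨h2re, -⟩ := h2
  simp only [Complex.sub_re, Complex.zero_re] at h2re
  -- t.re ≤ 2 ε
  have htre : t.re ≤ 2 * ε := by linarith
  -- trace of B * G
  have hBG : (B * G).trace = ((z * t.re : ℝ) : ℂ) := by
    rw [hG, Matrix.mul_sub, Matrix.mul_smul, Matrix.mul_smul, Matrix.mul_one,
      Matrix.mul_add, Matrix.trace_sub, Matrix.trace_smul, Matrix.trace_smul,
      Matrix.trace_add, ← ht, hBMh, hBtr]
    simp only [smul_eq_mul, RCLike.star_def, Complex.add_conj, smul_zero, sub_zero]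
    push_cast
    ring
  -- trace(ρ G) = trace(A G) + trace(B G)
  have hsplit : (ρ * G).trace = (A * G).trace + (B * G).trace := by
    have : ρ * G = A * G + B * G := by rw [hB, Matrix.sub_mul]; abel
    rw [this, Matrix.trace_add]
  -- trace(A H) ≥ trace(A G)
  have h3 : 0 ≤ (A * (H - G)).trace := trace_mul_psd_nonneg hA hfeas
  have h3' : (A * (H - G)).trace = (A * H).trace - (A * G).trace := by
    rw [Matrix.mul_sub, Matrix.trace_sub]
  rw [h3', Complex.le_def] at h3
  obtain ⟨h3re, -⟩ := h3
  simp only [Complex.sub_re, Complex.zero_re] at h3re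
  have hfin : z * t.re ≤ 2 * z * ε := by
    calc z * t.re ≤ z * (2 * ε) := mul_le_mul_of_nonneg_left htre hz
    _ = 2 * z * ε := by ring
  have : (ρ * G).trace.re = (A * G).trace.re + z * t.re := by
    rw [hsplit, Complex.add_re, hBG, Complex.ofReal_re]
  linarith
end
end
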